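/- Let A₀ = {0}, B₀ = {1}, and m_i = 2^{i+1} for i ≥ 0. Define A_{i+1} = A_i ∪ (m_i + B_i) and B_{i+1} = B_i ∪ (m_i + A_i), and let A = ⋃_i A_i, B = ⋃_i B_i. Then for every i, the sets A_i and B_i partition the interval [0, 2^{i+1}−1]; consequently A and B partition ℕ and R_A = R_B. -/

import Mathlib

/-- Representation function: number of unordered representations of `n`
as `s' + s''` with `s' < s''`, both in `S`. -/
noncomputable def R (S : Set ℕ) (n : ℕ) : ℕ :=
  {p : ℕ × ℕ | p.1 ∈ S ∧ p.2 ∈ S ∧ p.1 < p.2 ∧ p.1 + p.2 = n}.ncard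

/-- Translate of a set: `m + S`. -/
def tr (m : ℕ) (S : Set ℕ) : Set ℕ := (m + ·) '' S


/-- Iterated construction: `A_{i+1} = A_i ∪ (m_i + B_i)`, `B_{i+1} = B_i ∪ (m_i + A_i)`. -/
def AB (A0 B0 : Set ℕ) (m : ℕ → ℕ) : ℕ → Set ℕ × Set ℕ
  | 0 => (A0, B0)
  | i + 1 => ((AB A0 B0 m i).1 ∪ tr (m i) (AB A0 B0 m i).2,
              (AB A0 B0 m i).2 ∪ tr (m i) (AB A0 B0 m i).1)



/-- popcount -/
def pc : ℕ → ℕ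
  | 0 => 0
  | n+1 => pc ((n+1)/2) + (n+1) % 2
decreasing_by omega

lemma pc_rec (n : ℕ) : pc n = pc (n/2) + n % 2 := by
  cases n with
  | zero => simp [pc]
  | succ m => rw [pc]

lemma pc_add_pow (k : ℕ) : ∀ a : ℕ, a.testBit k = false → pc (a + 2^k) = pc a + 1 := by
  induction k with
  | zero =>
    intro a h
    rw [Nat.testBit_zero] at h
    have h2 : a % 2 = 0 := by simpa using h
    simp only [pow_zero]
    rw [pc_rec (a+1), pc_rec a]
    have : (a+1)/2 = a/2 := by omega
    rw [this]; omega
  | succ k ih =>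
    intro a h
    have h2 : (a/2).testBit k = false := by
      rw [← Nat.testBit_div_two] at h; exact h
    rw [pc_rec (a + 2^(k+1)), pc_rec a]
    have hd : (a + 2^(k+1))/2 = a/2 + 2^k := by
      have : 2^(k+1) = 2 * 2^k := by ring
      omega
    have hm : (a + 2^(k+1)) % 2 = a % 2 := by
      have : 2^(k+1) = 2 * 2^k := by ring
      omega
    rw [hd, hm, ih _ h2]; omega

lemma xor_pow_of_false (k : ℕ) : ∀ a : ℕ, a.testBit k = false → a ^^^ 2^k = a + 2^k := by
  induction k with
  | zero =>
    intro a h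
    rw [Nat.testBit_zero] at h
    have h2 : a % 2 = 0 := by simpa using h
    have hd : (a ^^^ 1) / 2 = a / 2 := by
      rw [Nat.xor_div_two]; simp
    have hm : (a ^^^ 1) % 2 = 1 := by
      rw [Nat.xor_mod_two_eq_one]; omega
    simp only [pow_zero]
    omega
  | succ k ih =>
    intro a h
    have h2 : (a/2).testBit k = false := by
      rw [← Nat.testBit_div_two] at h; exact h
    have hd : (a ^^^ 2^(k+1)) / 2 = a/2 + 2^k := by
      rw [Nat.xor_div_two]
      have : 2^(k+1)/2 = 2^k := by
        rw [pow_succ]; omega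
      rw [this, ih _ h2]
    have hm : (a ^^^ 2^(k+1)) % 2 = a % 2 := by
      have h1 : (2:ℕ)^(k+1) % 2 = 0 := by
        rw [pow_succ]; omega
      rcases Nat.mod_two_eq_zero_or_one a with ha | ha
      · have := @Nat.xor_mod_two_eq_one a (2^(k+1))
        omega
      · have := @Nat.xor_mod_two_eq_one a (2^(k+1))
        omega
    have : 2^(k+1) = 2 * 2^k := by ring
    omega

lemma pc_xor_parity (a k : ℕ) : pc (a ^^^ 2^k) % 2 = (pc a + 1) % 2 := by
  rcases h : a.testBit k with h' | h'
  · rw [xor_pow_of_false k a h, pc_add_pow k a h]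
  · set b := a ^^^ 2^k with hb
    have hbk : b.testBit k = false := by
      rw [hb, Nat.testBit_xor, h, Nat.testBit_two_pow_self]; rfl
    have hab : a = b + 2^k := by
      rw [← xor_pow_of_false k b hbk, hb, Nat.xor_assoc, Nat.xor_self, Nat.xor_zero]
    rw [hab, pc_add_pow k b hbk]; omega

lemma sum_flip {a b k : ℕ} (ha : a.testBit k = true) (hb : b.testBit k = false) :
    (a ^^^ 2^k) + (b ^^^ 2^k) = a + b := by
  set a' := a ^^^ 2^k with ha'
  have hak : a'.testBit k = false := by
    rw [ha', Nat.testBit_xor, ha, Nat.testBit_two_pow_self]; rfl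
  have h1 : a = a' + 2^k := by
    rw [← xor_pow_of_false k a' hak, ha', Nat.xor_assoc, Nat.xor_self, Nat.xor_zero]
  rw [xor_pow_of_false k b hb, h1]; ring

lemma exists_testBit_true {d : ℕ} (h : d ≠ 0) : ∃ i, d.testBit i = true := by
  by_contra hc
  push_neg at hc
  exact h (Nat.zero_of_testBit_eq_false (fun i => by simpa using hc i))

/-- lowest set bit -/
def lowbit (d : ℕ) : ℕ := if h : d = 0 then 0 else Nat.find (exists_testBit_true h)

lemma lowbit_true {d : ℕ} (h : d ≠ 0) : d.testBit (lowbit d) = true := by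
  rw [lowbit, dif_neg h]; exact Nat.find_spec (exists_testBit_true h)

/-- the pair pflip map -/
def pflip (p : ℕ × ℕ) : ℕ × ℕ :=
  let k := lowbit (p.1 ^^^ p.2)
  let a := p.1 ^^^ 2^k
  let b := p.2 ^^^ 2^k
  if a ≤ b then (a, b) else (b, a)

lemma xor_comps (p : ℕ × ℕ) (k : ℕ) : (p.1 ^^^ 2^k) ^^^ (p.2 ^^^ 2^k) = p.1 ^^^ p.2 := by
  rw [Nat.xor_comm (p.2) (2^k), ← Nat.xor_assoc, Nat.xor_assoc p.1, Nat.xor_self,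
    Nat.xor_zero]

theorem flip_main (p : ℕ × ℕ) (hlt : p.1 < p.2) :
    (pflip p).1 + (pflip p).2 = p.1 + p.2 ∧ (pflip p).1 < (pflip p).2 ∧
    pflip (pflip p) = p ∧
    (pc (pflip p).1 % 2 = (pc p.1 + 1) % 2 ∨ pc (pflip p).1 % 2 = (pc p.2 + 1) % 2) ∧
    (pc (pflip p).2 % 2 = (pc p.1 + 1) % 2 ∨ pc (pflip p).2 % 2 = (pc p.2 + 1) % 2) := by
  have hne : p.1 ≠ p.2 := Nat.ne_of_lt hlt
  have hd : p.1 ^^^ p.2 ≠ 0 := fun h => hne (xor_eq_zero_iff.mp h)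
  set k := lowbit (p.1 ^^^ p.2) with hk
  have hbit : (p.1 ^^^ p.2).testBit k = true := lowbit_true hd
  rw [Nat.testBit_xor] at hbit
  set a := p.1 ^^^ 2^k with hadef
  set b := p.2 ^^^ 2^k with hbdef
  have hxab : a ^^^ b = p.1 ^^^ p.2 := xor_comps p k
  have habne : a ≠ b := fun h => hd (by rw [← hxab, h, Nat.xor_self])
  have hsum : a + b = p.1 + p.2 := by
    rcases h1 : p.1.testBit k with h1' | h1'
    · have h2 : p.2.testBit k = true := by
        rcases h2 : p.2.testBit k with _|_ <;> simp_all
      have := sum_flip h2 h1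
      omega
    · have h2 : p.2.testBit k = false := by
        rcases h2 : p.2.testBit k with _|_ <;> simp_all
      have := sum_flip h1 h2
      omega
  have hfp : pflip p = if a ≤ b then (a, b) else (b, a) := rfl
  -- pflip (pflip p)
  have hinv : pflip (pflip p) = p := by
    have hxor2 : (pflip p).1 ^^^ (pflip p).2 = p.1 ^^^ p.2 := by
      rw [hfp]; split
      · exact hxab
      · rw [show (b,a).1 ^^^ (b,a).2 = b ^^^ a from rfl, Nat.xor_comm b a]; exact hxab
    have hk2 : lowbit ((pflip p).1 ^^^ (pflip p).2) = k := by rw [hxor2]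
    have h1 : a ^^^ 2^k = p.1 := by
      rw [hadef, Nat.xor_assoc, Nat.xor_self, Nat.xor_zero]
    have h2 : b ^^^ 2^k = p.2 := by
      rw [hbdef, Nat.xor_assoc, Nat.xor_self, Nat.xor_zero]
    rw [pflip]
    simp only [hk2]
    rw [hfp]
    split
    · simp only [h1, h2]
      rw [if_pos (Nat.le_of_lt hlt)]
    · simp only [h1, h2]
      rw [if_neg (by omega : ¬ p.2 ≤ p.1)]
  have hpa : pc a % 2 = (pc p.1 + 1) % 2 := pc_xor_parity p.1 k
  have hpb : pc b % 2 = (pc p.2 + 1) % 2 := pc_xor_parity p.2 k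
  refine ⟨?_, ?_, hinv, ?_, ?_⟩
  · rw [hfp]; split
    · exact hsum
    · show b + a = p.1 + p.2; omega
  · rw [hfp]; split
    · exact lt_of_le_of_ne (by assumption) habne
    · show b < a; omega
  · rw [hfp]; split
    · exact Or.inl hpa
    · exact Or.inr hpb
  · rw [hfp]; split
    · exact Or.inr hpb
    · exact Or.inl hpa


lemma char (i : ℕ) :
    (AB {0} {1} (fun i => 2 ^ (i + 1)) i).1 = {n | n < 2^(i+1) ∧ pc n % 2 = 0} ∧
    (AB {0} {1} (fun i => 2 ^ (i + 1)) i).2 = {n | n < 2^(i+1) ∧ pc n % 2 = 1} := by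
  have pc0 : pc 0 = 0 := by simp [pc]
  have pc1 : pc 1 = 1 := by rw [pc_rec]; simp [pc0]
  induction i with
  | zero =>
    constructor
    · ext n
      simp only [AB, Set.mem_singleton_iff, Set.mem_setOf_eq, pow_one]
      constructor
      · rintro rfl; exact ⟨by norm_num, by simp [pc0]⟩
      · rintro ⟨h1, h2⟩
        interval_cases n
        · rfl
        · simp [pc1] at h2
    · ext n
      simp only [AB, Set.mem_singleton_iff, Set.mem_setOf_eq, pow_one]
      constructor
      · rintro rfl; exact ⟨by norm_num, by simp [pc1]⟩
      · rintro ⟨h1, h2⟩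
        interval_cases n
        · simp [pc0] at h2
        · rfl
  | succ i ih =>
    obtain ⟨ihA, ihB⟩ := ih
    have hpow : (2:ℕ)^(i+1+1) = 2^(i+1) + 2^(i+1) := by ring
    have key : ∀ b : ℕ, b < 2^(i+1) → pc (2^(i+1) + b) = pc b + 1 := by
      intro b hb
      rw [Nat.add_comm]
      exact pc_add_pow (i+1) b (Nat.testBit_eq_false_of_lt hb)
    constructor
    · show (AB {0} {1} (fun i => 2 ^ (i + 1)) i).1 ∪
          tr (2^(i+1)) (AB {0} {1} (fun i => 2 ^ (i + 1)) i).2 = _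
      rw [ihA, ihB]
      ext n
      simp only [Set.mem_union, Set.mem_setOf_eq, tr, Set.mem_image]
      constructor
      · rintro (⟨h1, h2⟩ | ⟨b, ⟨hb1, hb2⟩, rfl⟩)
        · exact ⟨by omega, h2⟩
        · exact ⟨by omega, by rw [key b hb1]; omega⟩
      · rintro ⟨h1, h2⟩
        by_cases hn : n < 2^(i+1)
        · exact Or.inl ⟨hn, h2⟩
        · refine Or.inr ⟨n - 2^(i+1), ⟨by omega, ?_⟩, by omega⟩
          have : n = 2^(i+1) + (n - 2^(i+1)) := by omega
          rw [this, key _ (by omega)] at h2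
          omega
    · show (AB {0} {1} (fun i => 2 ^ (i + 1)) i).2 ∪
          tr (2^(i+1)) (AB {0} {1} (fun i => 2 ^ (i + 1)) i).1 = _
      rw [ihA, ihB]
      ext n
      simp only [Set.mem_union, Set.mem_setOf_eq, tr, Set.mem_image]
      constructor
      · rintro (⟨h1, h2⟩ | ⟨b, ⟨hb1, hb2⟩, rfl⟩)
        · exact ⟨by omega, h2⟩
        · exact ⟨by omega, by rw [key b hb1]; omega⟩
      · rintro ⟨h1, h2⟩
        by_cases hn : n < 2^(i+1)
        · exact Or.inl ⟨hn, h2⟩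
        · refine Or.inr ⟨n - 2^(i+1), ⟨by omega, ?_⟩, by omega⟩
          have : n = 2^(i+1) + (n - 2^(i+1)) := by omega
          rw [this, key _ (by omega)] at h2
          omega

lemma unionA : (⋃ i, (AB {0} {1} (fun i => 2 ^ (i + 1)) i).1) = {n | pc n % 2 = 0} := by
  ext n
  simp only [Set.mem_iUnion, (char _).1, Set.mem_setOf_eq]
  constructor
  · rintro ⟨i, _, h⟩; exact h
  · intro h
    refine ⟨n, ?_, h⟩
    calc n < 2^n := Nat.lt_two_pow_self
    _ ≤ 2^(n+1) := Nat.pow_le_pow_right (by norm_num) (by omega)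

lemma unionB : (⋃ i, (AB {0} {1} (fun i => 2 ^ (i + 1)) i).2) = {n | pc n % 2 = 1} := by
  ext n
  simp only [Set.mem_iUnion, (char _).2, Set.mem_setOf_eq]
  constructor
  · rintro ⟨i, _, h⟩; exact h
  · intro h
    refine ⟨n, ?_, h⟩
    calc n < 2^n := Nat.lt_two_pow_self
    _ ≤ 2^(n+1) := Nat.pow_le_pow_right (by norm_num) (by omega)

lemma R_eq : R {n | pc n % 2 = 0} = R {n | pc n % 2 = 1} := by
  funext n
  unfold R
  set SA := {p : ℕ × ℕ | p.1 ∈ {n | pc n % 2 = 0} ∧ p.2 ∈ {n | pc n % 2 = 0} ∧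
    p.1 < p.2 ∧ p.1 + p.2 = n} with hSA
  set SB := {p : ℕ × ℕ | p.1 ∈ {n | pc n % 2 = 1} ∧ p.2 ∈ {n | pc n % 2 = 1} ∧
    p.1 < p.2 ∧ p.1 + p.2 = n} with hSB
  have himg : pflip '' SA = SB := by
    ext q
    constructor
    · rintro ⟨p, ⟨h1, h2, hlt, hsum⟩, rfl⟩
      obtain ⟨fs, fo, _, fp1, fp2⟩ := flip_main p hlt
      rw [hSB]
      simp only [Set.mem_setOf_eq] at h1 h2 ⊢
      refine ⟨?_, ?_, fo, by omega⟩
      · rcases fp1 with h | h <;> omega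
      · rcases fp2 with h | h <;> omega
    · intro hq
      obtain ⟨h1, h2, hlt, hsum⟩ := hq
      obtain ⟨fs, fo, finv, fp1, fp2⟩ := flip_main q hlt
      simp only [Set.mem_setOf_eq] at h1 h2
      refine ⟨pflip q, ?_, finv⟩
      rw [hSA]
      simp only [Set.mem_setOf_eq]
      refine ⟨?_, ?_, fo, by omega⟩
      · rcases fp1 with h | h <;> omega
      · rcases fp2 with h | h <;> omega
  have hinj : Set.InjOn pflip SA := by
    intro p hp p' hp' he
    obtain ⟨_, _, hlt, _⟩ := hp
    obtain ⟨_, _, hlt', _⟩ := hp'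
    have i1 := (flip_main p hlt).2.2.1
    have i2 := (flip_main p' hlt').2.2.1
    rw [← i1, ← i2, he]
  rw [← himg, Set.ncard_image_of_injOn hinj]

theorem stmt_7 :
    (∀ i, (AB {0} {1} (fun i => 2 ^ (i + 1)) i).1 ∪ (AB {0} {1} (fun i => 2 ^ (i + 1)) i).2
            = Set.Iio (2 ^ (i + 1)) ∧
          (AB {0} {1} (fun i => 2 ^ (i + 1)) i).1 ∩ (AB {0} {1} (fun i => 2 ^ (i + 1)) i).2
            = ∅) ∧
    (⋃ i, (AB {0} {1} (fun i => 2 ^ (i + 1)) i).1) ∪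
        (⋃ i, (AB {0} {1} (fun i => 2 ^ (i + 1)) i).2) = Set.univ ∧
    (⋃ i, (AB {0} {1} (fun i => 2 ^ (i + 1)) i).1) ∩
        (⋃ i, (AB {0} {1} (fun i => 2 ^ (i + 1)) i).2) = ∅ ∧
    R (⋃ i, (AB {0} {1} (fun i => 2 ^ (i + 1)) i).1)
      = R (⋃ i, (AB {0} {1} (fun i => 2 ^ (i + 1)) i).2) := by
  refine ⟨fun i => ⟨?_, ?_⟩, ?_, ?_, ?_⟩
  · rw [(char i).1, (char i).2]
    ext n
    simp only [Set.mem_union, Set.mem_setOf_eq, Set.mem_Iio]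
    omega
  · rw [(char i).1, (char i).2]
    ext n
    simp only [Set.mem_inter_iff, Set.mem_setOf_eq, Set.mem_empty_iff_false, iff_false]
    omega
  · rw [unionA, unionB]
    ext n
    simp only [Set.mem_union, Set.mem_setOf_eq, Set.mem_univ, iff_true]
    omega
  · rw [unionA, unionB]
    ext n
    simp only [Set.mem_inter_iff, Set.mem_setOf_eq, Set.mem_empty_iff_false, iff_false]
    omega
  · rw [unionA, unionB, R_eq]
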